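/- arXiv:2002.07469 — 2 statements merged into one kernel-verified Lean document; each statement's English description precedes it below -/
import Mathlib

section
/- The TED activation function λ(α) = e^α/(e^α − 1) − 1/α, extended by λ(0) = 1/2, takes values strictly in the open interval (0,1) for all real α. -/
open Real

noncomputable def tedActivation (α : ℝ) : ℝ :=
  if α = 0 then 1 / 2 else Real.exp α / (Real.exp α - 1) - 1 / α

theorem ted_activation_mem_Ioo (α : ℝ) :
    tedActivation α ∈ Set.Ioo (0 : ℝ) 1 := by
  unfold tedActivation
  by_cases h : α = 0
  · simp [h]; norm_num
  · simp only [h, if_false]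
    have hexp : (0:ℝ) < Real.exp α := Real.exp_pos α
    -- denominator positive
    have hD : 0 < α * (Real.exp α - 1) := by
      rcases lt_or_gt_of_ne h with hneg | hpos
      · have : Real.exp α < 1 := Real.exp_lt_one_iff.mpr hneg
        nlinarith
      · have : 1 < Real.exp α := by nlinarith [Real.add_one_lt_exp h]
        nlinarith
    have he1 : Real.exp α - 1 ≠ 0 := by
      intro hc
      simp [hc] at hD
    -- strict exp bounds
    have h1 : α + 1 < Real.exp α := Real.add_one_lt_exp h
    have h2 : -α + 1 < Real.exp (-α) := Real.add_one_lt_exp (neg_ne_zero.mpr h)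
    have h2' : (1 - α) * Real.exp α < 1 := by
      have := mul_lt_mul_of_pos_right h2 hexp
      rw [← Real.exp_add] at this
      simp at this
      linarith
    -- numerator positive
    have hN : 0 < α * Real.exp α - (Real.exp α - 1) := by nlinarith
    have heq : Real.exp α / (Real.exp α - 1) - 1 / α =
        (α * Real.exp α - (Real.exp α - 1)) / (α * (Real.exp α - 1)) := by
      field_simp
    rw [heq]
    constructor
    · exact div_pos hN hD
    · rw [div_lt_one hD]
      nlinarith
end

section
/- The derivative of the TED activation λ(α) = e^α/(e^α − 1) − 1/α equals 1/α² − e^α/(e^α − 1)², and this quantity is strictly positive for all α ≠ 0; hence λ is strictly monotone increasing. -/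
open Real

private lemma ted_hasDerivAt {α : ℝ} (hα : α ≠ 0) :
    HasDerivAt (fun a : ℝ => Real.exp a / (Real.exp a - 1) - 1 / a)
      (1 / α ^ 2 - Real.exp α / (Real.exp α - 1) ^ 2) α := by
  have he1 : Real.exp α - 1 ≠ 0 := by
    rw [sub_ne_zero]
    exact fun h => hα ((Real.exp_eq_one_iff α).mp h)
  have h1 : HasDerivAt Real.exp (Real.exp α) α := Real.hasDerivAt_exp α
  have h2 : HasDerivAt (fun a => Real.exp a - 1) (Real.exp α) α := h1.sub_const 1
  have hdiv := h1.div h2 he1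
  have hinv : HasDerivAt (fun a : ℝ => 1 / a) (-(α ^ 2)⁻¹) α := by
    simpa only [one_div] using hasDerivAt_inv hα
  have := hdiv.sub hinv
  refine this.congr_deriv ?_
  field_simp
  ring

private lemma ted_g_aux : ∀ α : ℝ, α ≠ 0 → 0 < ((α - 1) * Real.exp α + 1) := by
  intro α hα
  have h := Real.add_one_lt_exp (neg_ne_zero.mpr hα)
  have hexp : (0:ℝ) < Real.exp α := Real.exp_pos α
  rcases le_or_gt 1 α with h1 | h1
  · nlinarith
  · have : (1 - α) * Real.exp α < 1 := by
      have := mul_lt_mul_of_pos_right h hexp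
      rw [← Real.exp_add] at this
      simp at this
      nlinarith
    nlinarith

private lemma ted_g_pos : ∀ α : ℝ, 0 < α → 0 < (α - 2) * Real.exp α + α + 2 := by
  have hd : ∀ x : ℝ, HasDerivAt (fun a : ℝ => (a - 2) * Real.exp a + a + 2)
      ((x - 1) * Real.exp x + 1) x := by
    intro x
    have h1 : HasDerivAt (fun a : ℝ => (a - 2) * Real.exp a)
        (1 * Real.exp x + (x - 2) * Real.exp x) x :=
      ((hasDerivAt_id x).sub_const 2).mul (Real.hasDerivAt_exp x)
    have h2 := h1.add (hasDerivAt_id x)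
    have := (h2.add_const 2)
    refine this.congr_deriv ?_
    ring
  have hmono : StrictMonoOn (fun a : ℝ => (a - 2) * Real.exp a + a + 2) (Set.Ici 0) := by
    apply strictMonoOn_of_deriv_pos (convex_Ici 0)
    · exact fun x _ => ((hd x).differentiableAt.continuousAt).continuousWithinAt
    · intro x hx
      rw [interior_Ici] at hx
      rw [(hd x).deriv]
      exact ted_g_aux x (ne_of_gt hx)
  intro α hα
  have := hmono (Set.self_mem_Ici) (Set.mem_Ici.mpr hα.le) hα
  simpa using this

private lemma ted_g_neg : ∀ α : ℝ, α < 0 → (α - 2) * Real.exp α + α + 2 < 0 := by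
  have hd : ∀ x : ℝ, HasDerivAt (fun a : ℝ => (a - 2) * Real.exp a + a + 2)
      ((x - 1) * Real.exp x + 1) x := by
    intro x
    have h1 : HasDerivAt (fun a : ℝ => (a - 2) * Real.exp a)
        (1 * Real.exp x + (x - 2) * Real.exp x) x :=
      ((hasDerivAt_id x).sub_const 2).mul (Real.hasDerivAt_exp x)
    have h2 := h1.add (hasDerivAt_id x)
    have := (h2.add_const 2)
    refine this.congr_deriv ?_
    ring
  have hmono : StrictMonoOn (fun a : ℝ => (a - 2) * Real.exp a + a + 2) (Set.Iic 0) := by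
    apply strictMonoOn_of_deriv_pos (convex_Iic 0)
    · exact fun x _ => ((hd x).differentiableAt.continuousAt).continuousWithinAt
    · intro x hx
      rw [interior_Iic] at hx
      rw [(hd x).deriv]
      exact ted_g_aux x (ne_of_lt hx)
  intro α hα
  have := hmono (Set.mem_Iic.mpr hα.le) (Set.self_mem_Iic) hα
  simpa using this

private lemma ted_denom_pos {α : ℝ} (hα : α ≠ 0) : 0 < α * (Real.exp α - 1) := by
  rcases lt_or_gt_of_ne hα with h | h
  · have : Real.exp α < 1 := by rw [← Real.exp_zero]; exact Real.exp_lt_exp.mpr h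
    nlinarith
  · have : 1 < Real.exp α := by rw [← Real.exp_zero]; exact Real.exp_lt_exp.mpr h
    nlinarith

private lemma ted_half {α : ℝ} (hα : α ≠ 0) :
    Real.exp α / (Real.exp α - 1) - 1 / α - 1 / 2 =
      ((α - 2) * Real.exp α + α + 2) / (2 * (α * (Real.exp α - 1))) := by
  have he1 : Real.exp α - 1 ≠ 0 := by
    rw [sub_ne_zero]; exact fun h => hα ((Real.exp_eq_one_iff α).mp h)
  field_simp
  ring

private lemma ted_deriv_pos {α : ℝ} (hα : α ≠ 0) :
    0 < 1 / α ^ 2 - Real.exp α / (Real.exp α - 1) ^ 2 := by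
  have he1 : Real.exp α - 1 ≠ 0 := by
    rw [sub_ne_zero]; exact fun h => hα ((Real.exp_eq_one_iff α).mp h)
  have hα2 : (0:ℝ) < α ^ 2 := by positivity
  have he2 : (0:ℝ) < (Real.exp α - 1) ^ 2 := by positivity
  have key : α ^ 2 * Real.exp α < (Real.exp α - 1) ^ 2 := by
    have hs : |α / 2| < |Real.sinh (α / 2)| := by
      rw [Real.abs_sinh]
      exact (Real.self_lt_sinh_iff).mpr (abs_pos.mpr (by positivity))
    have hs2 : (α / 2) ^ 2 < Real.sinh (α / 2) ^ 2 := by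
      rw [← sq_abs (α / 2), ← sq_abs (Real.sinh (α / 2))]
      exact pow_lt_pow_left₀ hs (abs_nonneg _) (by norm_num)
    have hfac : Real.exp α - 1 = Real.exp (α / 2) * (2 * Real.sinh (α / 2)) := by
      have h2s : (2:ℝ) * Real.sinh (α/2) = Real.exp (α/2) - Real.exp (-(α/2)) := by
        rw [Real.sinh_eq]; ring
      rw [h2s, mul_sub, ← Real.exp_add, ← Real.exp_add]
      norm_num
    have hE : Real.exp (α/2) * Real.exp (α/2) = Real.exp α := by
      rw [← Real.exp_add]; ring_nf
    rw [hfac]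
    have hep : (0:ℝ) < Real.exp (α/2) := Real.exp_pos _
    nlinarith [hs2, hE, hep, mul_lt_mul_of_pos_right hs2 (Real.exp_pos α)]
  rw [sub_pos, div_lt_div_iff₀ he2 hα2]
  nlinarith

theorem ted_activation_deriv_pos_strictMono :
    (∀ α : ℝ, α ≠ 0 →
      HasDerivAt (fun a : ℝ => Real.exp a / (Real.exp a - 1) - 1 / a)
        (1 / α ^ 2 - Real.exp α / (Real.exp α - 1) ^ 2) α ∧
      0 < 1 / α ^ 2 - Real.exp α / (Real.exp α - 1) ^ 2) ∧
    StrictMonoOn (fun a : ℝ => Real.exp a / (Real.exp a - 1) - 1 / a)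
      {α : ℝ | α ≠ 0} := by
  set f : ℝ → ℝ := fun a => Real.exp a / (Real.exp a - 1) - 1 / a with hf
  refine ⟨fun α hα => ⟨ted_hasDerivAt hα, ted_deriv_pos hα⟩, ?_⟩
  -- monotone on Iio 0 and Ioi 0
  have hmono_neg : StrictMonoOn f (Set.Iio 0) := by
    apply strictMonoOn_of_deriv_pos (convex_Iio 0)
    · exact fun x hx =>
        ((ted_hasDerivAt (ne_of_lt hx)).differentiableAt.continuousAt).continuousWithinAt
    · intro x hx
      rw [interior_Iio] at hx
      rw [(ted_hasDerivAt (ne_of_lt hx)).deriv]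
      exact ted_deriv_pos (ne_of_lt hx)
  have hmono_pos : StrictMonoOn f (Set.Ioi 0) := by
    apply strictMonoOn_of_deriv_pos (convex_Ioi 0)
    · exact fun x hx =>
        ((ted_hasDerivAt (ne_of_gt hx)).differentiableAt.continuousAt).continuousWithinAt
    · intro x hx
      rw [interior_Ioi] at hx
      rw [(ted_hasDerivAt (ne_of_gt hx)).deriv]
      exact ted_deriv_pos (ne_of_gt hx)
  have hlt : ∀ x : ℝ, x < 0 → f x < 1 / 2 := by
    intro x hx
    have h := ted_half (ne_of_lt hx)
    have hden := ted_denom_pos (ne_of_lt hx)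
    have hg := ted_g_neg x hx
    have : f x - 1 / 2 < 0 := by
      rw [hf]; simp only []
      rw [h]
      exact div_neg_of_neg_of_pos hg (by linarith)
    linarith
  have hgt : ∀ x : ℝ, 0 < x → 1 / 2 < f x := by
    intro x hx
    have h := ted_half (ne_of_gt hx)
    have hden := ted_denom_pos (ne_of_gt hx)
    have hg := ted_g_pos x hx
    have : 0 < f x - 1 / 2 := by
      rw [hf]; simp only []
      rw [h]
      exact div_pos hg (by linarith)
    linarith
  intro x hx y hy hxy
  simp only [Set.mem_setOf_eq] at hx hy
  rcases lt_or_gt_of_ne hx with hx' | hx'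
  · rcases lt_or_gt_of_ne hy with hy' | hy'
    · exact hmono_neg hx' hy' hxy
    · exact lt_trans (hlt x hx') (hgt y hy')
  · rcases lt_or_gt_of_ne hy with hy' | hy'
    · exact absurd hxy (not_lt.mpr (le_of_lt (lt_trans hy' hx')))
    · exact hmono_pos hx' hy' hxy
end
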